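/- The cotransitions of the double-insertion chain are the pattern frequencies: P(Π^H_n = σ | Π^H_{n+1} = τ) = t(σ, τ) for all n, σ ∈ S_n, τ ∈ S_{n+1}. -/

import Mathlib

/-- `patFreq σ π` is the relative frequency `t(σ, π)` of the pattern `σ ∈ S_k` in
`π ∈ S_n`: the fraction of `k`-element subsets of `[n]` (encoded as strictly increasing
maps) whose induced pattern equals `σ`; it is `0` when `k > n`. -/
def patFreq {k n : ℕ} (σ : Equiv.Perm (Fin k)) (π : Equiv.Perm (Fin n)) : ℚ :=
  (((Finset.univ : Finset (Fin k → Fin n)).filter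
      (fun f => (∀ i j : Fin k, i < j → f i < f j) ∧
        (∀ i j : Fin k, σ i < σ j ↔ π (f i) < π (f j)))).card : ℚ) / (n.choose k)

/-- Insertion of the value `J` at position `I` into the permutation `π ∈ S_n`:
the resulting permutation `τ ∈ S_{n+1}` satisfies `τ I = J`, and on the remaining
positions the values of `π` keep their relative order (positions `≥ I` are shifted right
and values `≥ J` are incremented). -/
def insertPerm {n : ℕ} (π : Equiv.Perm (Fin n)) (I J : Fin (n + 1)) :
    Equiv.Perm (Fin (n + 1)) :=
  ((finSuccEquiv' I).trans (Equiv.optionCongr π)).trans (finSuccEquiv' J).symm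

/-- One-step transition probability of the double-insertion chain `Π^H`: insert a
uniform value `J` at a uniform position `I`, both on `[n+1]`, independently. -/
def pstepH {n : ℕ} (π : Equiv.Perm (Fin n)) (τ : Equiv.Perm (Fin (n + 1))) : ℚ :=
  (((Finset.univ : Finset (Fin (n + 1) × Fin (n + 1))).filter
      (fun p => insertPerm π p.1 p.2 = τ)).card : ℚ) / ((n + 1) ^ 2)

/-- `pH k σ m τ` is the `m`-step transition probability
`P(Π^H_{k+m} = τ | Π^H_k = σ)` of the double-insertion Markov chain. -/
def pH (k : ℕ) (σ : Equiv.Perm (Fin k)) : (m : ℕ) → Equiv.Perm (Fin (k + m)) → ℚ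
  | 0, τ => if σ = τ then 1 else 0
  | m + 1, τ => ∑ ρ : Equiv.Perm (Fin (k + m)), pH k σ m ρ * pstepH ρ τ

lemma insertPerm_self {n : ℕ} (π : Equiv.Perm (Fin n)) (I J : Fin (n + 1)) :
    insertPerm π I J I = J := by
  simp [insertPerm]

lemma insertPerm_succAbove {n : ℕ} (π : Equiv.Perm (Fin n)) (I J : Fin (n + 1)) (k : Fin n) :
    insertPerm π I J (I.succAbove k) = J.succAbove (π k) := by
  simp [insertPerm]

lemma insertPerm_eq_iff {n : ℕ} (π : Equiv.Perm (Fin n)) (I J : Fin (n + 1))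
    (τ : Equiv.Perm (Fin (n + 1))) :
    insertPerm π I J = τ ↔ τ I = J ∧ ∀ k, τ (I.succAbove k) = J.succAbove (π k) := by
  constructor
  · rintro rfl
    exact ⟨insertPerm_self π I J, insertPerm_succAbove π I J⟩
  · rintro ⟨h1, h2⟩
    ext x
    rcases eq_or_ne x I with rfl | hx
    · rw [insertPerm_self, h1]
    · obtain ⟨k, rfl⟩ := Fin.exists_succAbove_eq hx
      rw [insertPerm_succAbove, h2]

lemma strictMono_eq_of {α : Type*} [LinearOrder α] {k : ℕ} {f g : Fin k → α}
    (hf : StrictMono f) (hg : StrictMono g) (h : ∀ x, ∃ y, g y = f x) : f = g := by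
  have hcard : (Finset.image g Finset.univ).card = k := by
    rw [Finset.card_image_of_injective _ hg.injective, Finset.card_univ, Fintype.card_fin]
  have h1 := Finset.orderEmbOfFin_unique hcard
    (f := f) (fun x => by obtain ⟨y, hy⟩ := h x; exact hy ▸ Finset.mem_image_of_mem _ (Finset.mem_univ y)) hf
  have h2 := Finset.orderEmbOfFin_unique hcard
    (f := g) (fun x => Finset.mem_image_of_mem _ (Finset.mem_univ x)) hg
  rw [h1]; exact h2.symm

lemma count_eq {n : ℕ} (σ : Equiv.Perm (Fin n)) (τ : Equiv.Perm (Fin (n + 1))) :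
    ((Finset.univ : Finset (Fin (n + 1) × Fin (n + 1))).filter
      (fun p => insertPerm σ p.1 p.2 = τ)).card =
    ((Finset.univ : Finset (Fin n → Fin (n + 1))).filter
      (fun f => (∀ i j : Fin n, i < j → f i < f j) ∧
        (∀ i j : Fin n, σ i < σ j ↔ τ (f i) < τ (f j)))).card := by
  apply Finset.card_bij (fun p _ => (p.1.succAbove : Fin n → Fin (n + 1)))
  · rintro ⟨I, J⟩ hp
    rw [Finset.mem_filter] at hp
    obtain ⟨hIJ, hs⟩ := (insertPerm_eq_iff σ I J τ).1 hp.2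
    rw [Finset.mem_filter]
    refine ⟨Finset.mem_univ _, fun i j hij => (Fin.strictMono_succAbove I) hij, fun i j => ?_⟩
    rw [hs i, hs j, Fin.succAbove_lt_succAbove_iff]
  · rintro ⟨I₁, J₁⟩ h₁ ⟨I₂, J₂⟩ h₂ hIJ
    rw [Finset.mem_filter] at h₁ h₂
    have hI : I₁ = I₂ := Fin.succAbove_left_injective hIJ
    obtain ⟨hJ₁, -⟩ := (insertPerm_eq_iff σ I₁ J₁ τ).1 h₁.2
    obtain ⟨hJ₂, -⟩ := (insertPerm_eq_iff σ I₂ J₂ τ).1 h₂.2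
    subst hI
    simp [← hJ₁, ← hJ₂]
  · intro f hf
    rw [Finset.mem_filter] at hf
    obtain ⟨-, hmono, hpat⟩ := hf
    have hfm : StrictMono f := fun i j h => hmono i j h
    -- the missed value I
    have hcard : (Finset.image f Finset.univ)ᶜ.card = 1 := by
      rw [Finset.card_compl, Finset.card_image_of_injective _ hfm.injective,
        Finset.card_univ, Fintype.card_fin, Fintype.card_fin]
      omega
    obtain ⟨I, hI⟩ := Finset.card_eq_one.1 hcard
    have hInot : I ∉ Finset.image f Finset.univ := by
      have : I ∈ (Finset.image f Finset.univ)ᶜ := by rw [hI]; exact Finset.mem_singleton_self I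
      exact Finset.mem_compl.1 this
    have hfI : ∀ x, f x ≠ I := by
      intro x hx
      exact hInot (hx ▸ Finset.mem_image_of_mem _ (Finset.mem_univ x))
    have hfeq : f = I.succAbove := by
      apply strictMono_eq_of hfm (Fin.strictMono_succAbove I)
      intro x
      exact Fin.exists_succAbove_eq (hfI x)
    set J := τ I with hJ
    -- show insertPerm σ I J = τ
    have hA : StrictMono (fun i => τ (f (σ.symm i))) := by
      intro i j hij
      have := (hpat (σ.symm i) (σ.symm j)).1
      simp only [Equiv.apply_symm_apply] at this
      exact this hij
    have hAB : (fun i => τ (f (σ.symm i))) = J.succAbove := by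
      apply strictMono_eq_of hA (Fin.strictMono_succAbove J)
      intro x
      apply Fin.exists_succAbove_eq
      intro hx
      exact hfI (σ.symm x) (τ.injective hx)
    have key : ∀ k, τ (f k) = J.succAbove (σ k) := by
      intro k
      have := congrFun hAB (σ k)
      simpa using this
    refine ⟨(I, J), Finset.mem_filter.2 ⟨Finset.mem_univ _, ?_⟩, hfeq.symm⟩
    rw [insertPerm_eq_iff]
    exact ⟨hJ.symm, fun k => by rw [← hfeq]; exact key k⟩

lemma optionCongr_removeNone {α β : Type*} (e : Option α ≃ Option β) (h : e none = none) :
    Equiv.optionCongr (Equiv.removeNone e) = e := by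
  apply Equiv.ext
  intro x
  cases x with
  | none => simp [h]
  | some a =>
    have hne : e (some a) ≠ none := by
      rw [← h]
      intro hc
      simpa using e.injective hc
    obtain ⟨b, hb⟩ := Option.ne_none_iff_exists'.1 hne
    simp only [Equiv.optionCongr_apply, Option.map_some]
    exact Equiv.removeNone_some e ⟨b, hb⟩

/-- the unique permutation whose insertion at position `I` (with value `τ I`) gives `τ`. -/
def delPerm {n : ℕ} (τ : Equiv.Perm (Fin (n + 1))) (I : Fin (n + 1)) : Equiv.Perm (Fin n) :=
  Equiv.removeNone ((((finSuccEquiv' I).symm.trans (τ : Equiv.Perm (Fin (n+1)))).trans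
    (finSuccEquiv' (τ I))))

lemma insertPerm_delPerm {n : ℕ} (τ : Equiv.Perm (Fin (n + 1))) (I : Fin (n + 1)) :
    insertPerm (delPerm τ I) I (τ I) = τ := by
  rw [insertPerm, delPerm, optionCongr_removeNone _ (by simp)]
  ext x
  simp

lemma card_rho {n : ℕ} (I J : Fin (n + 1)) (τ : Equiv.Perm (Fin (n + 1))) :
    ((Finset.univ : Finset (Equiv.Perm (Fin n))).filter
      (fun ρ => insertPerm ρ I J = τ)).card = if τ I = J then 1 else 0 := by
  split_ifs with h
  · rw [Finset.card_eq_one]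
    refine ⟨delPerm τ I, ?_⟩
    rw [Finset.eq_singleton_iff_unique_mem]
    constructor
    · rw [Finset.mem_filter]
      exact ⟨Finset.mem_univ _, h ▸ insertPerm_delPerm τ I⟩
    · intro ρ hρ
      rw [Finset.mem_filter] at hρ
      obtain ⟨-, hs⟩ := (insertPerm_eq_iff ρ I J τ).1 hρ.2
      have hd := h ▸ insertPerm_delPerm τ I
      obtain ⟨-, hs'⟩ := (insertPerm_eq_iff (delPerm τ I) I J τ).1 hd
      ext k : 1
      exact Fin.succAbove_right_injective ((hs k).symm.trans (hs' k))
  · rw [Finset.card_eq_zero, Finset.filter_eq_empty_iff]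
    intro ρ _ heq
    exact h (by rw [← heq, insertPerm_self])

lemma sum_card {n : ℕ} (τ : Equiv.Perm (Fin (n + 1))) :
    ∑ ρ : Equiv.Perm (Fin n),
      ((Finset.univ : Finset (Fin (n + 1) × Fin (n + 1))).filter
        (fun p => insertPerm ρ p.1 p.2 = τ)).card = n + 1 := by
  have h1 : ∀ ρ : Equiv.Perm (Fin n),
      ((Finset.univ : Finset (Fin (n + 1) × Fin (n + 1))).filter
        (fun p => insertPerm ρ p.1 p.2 = τ)).card
      = ∑ p : Fin (n + 1) × Fin (n + 1), if insertPerm ρ p.1 p.2 = τ then 1 else 0 := by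
    intro ρ; rw [Finset.card_filter]
  simp_rw [h1]
  rw [Finset.sum_comm]
  have h2 : ∀ p : Fin (n + 1) × Fin (n + 1),
      (∑ ρ : Equiv.Perm (Fin n), if insertPerm ρ p.1 p.2 = τ then 1 else 0)
      = if τ p.1 = p.2 then 1 else 0 := by
    intro p
    rw [← Finset.card_filter, card_rho]
  simp_rw [h2]
  rw [Fintype.sum_prod_type]
  simp

lemma sum_pstepH {n : ℕ} (τ : Equiv.Perm (Fin (n + 1))) :
    ∑ ρ : Equiv.Perm (Fin n), pstepH ρ τ = 1 / ((n : ℚ) + 1) := by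
  unfold pstepH
  rw [← Finset.sum_div, ← Nat.cast_sum, sum_card τ]
  have h0 : ((n : ℚ) + 1) ≠ 0 := by positivity
  push_cast
  field_simp

lemma pH_uniform : ∀ (m : ℕ) (σ : Equiv.Perm (Fin (1 + m))),
    pH 1 1 m σ = 1 / (Nat.factorial (1 + m) : ℚ) := by
  intro m
  induction m with
  | zero =>
    intro σ
    have h : (1 : Equiv.Perm (Fin (1 + 0))) = σ := by
      apply Equiv.ext
      intro i
      have : Subsingleton (Fin (1 + 0)) := Fin.subsingleton_one
      exact Subsingleton.elim _ _
    simp [pH, h]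
  | succ m ih =>
    intro τ
    rw [pH]
    simp only [ih]
    rw [← Finset.mul_sum, sum_pstepH (n := 1 + m) τ]
    show _ = 1 / ((Nat.factorial (1 + m + 1) : ℚ))
    rw [Nat.factorial_succ]
    have h0 : ((1 + m : ℕ) : ℚ) + 1 ≠ 0 := by positivity
    have h1 : ((Nat.factorial (1 + m) : ℚ)) ≠ 0 := by
      exact_mod_cast Nat.factorial_ne_zero (1 + m)
    push_cast
    field_simp

/-- The cotransitions of the double-insertion chain are the pattern
frequencies: `P(Π^H_n = σ | Π^H_{n+1} = τ) = t(σ, τ)` for the chain started at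
`Π^H_1 = (1)` (here `n = 1 + m`), where the conditional probability is
`P(Π^H_n = σ) p(σ,τ) / P(Π^H_{n+1} = τ)`. -/
theorem pH_cotransition (m : ℕ) (σ : Equiv.Perm (Fin (1 + m)))
    (τ : Equiv.Perm (Fin (1 + m + 1))) :
    pH 1 1 m σ * pstepH σ τ / pH 1 1 (m + 1) τ = patFreq σ τ := by
  rw [pH_uniform m σ, pH_uniform (m + 1) τ]
  unfold pstepH patFreq
  rw [← count_eq σ τ, Nat.choose_succ_self_right]
  have hF : ((Nat.factorial (1 + (m + 1)) : ℕ) : ℚ)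
      = (((1 + m : ℕ) : ℚ) + 1) * ((Nat.factorial (1 + m) : ℕ) : ℚ) := by
    rw [show (1 + (m + 1)) = (1 + m) + 1 from rfl, Nat.factorial_succ]
    push_cast
    ring
  rw [hF]
  have h0 : (((1 + m : ℕ) : ℚ) + 1) ≠ 0 := by positivity
  have h1 : ((Nat.factorial (1 + m) : ℕ) : ℚ) ≠ 0 := by
    exact_mod_cast Nat.factorial_ne_zero (1 + m)
  push_cast
  field_simp
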